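/- For every n ≥ 0, the random variables Y_n and Z_n are independent, so that ℙ(Y_n = y, Z_n = z) = p_y · ℙ(Z_n = z) for all y ∈ ℕ and z ∈ {0,…,C−1}. Consequently, if in addition p_0 > 0 and p_0 + p_1 < 1, then for all y and z, lim_{n→∞} ℙ(Y_n = y, Z_n = z) = p_y π_z, where π is the unique stationary probability distribution of the transition matrix P; i.e. the joint process (Y_n, Z_n) has limiting distribution given by the product p_y π_z. -/

import Mathlib

open scoped BigOperators
open MeasureTheory ProbabilityTheory Filter

/-- Transition matrix of the finite-capacity Moran storage chain on states `{0, …, C-1}`: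
`P 0 0 = p 0 + p 1`, `P 0 j = p (j+1)` for `1 ≤ j ≤ C-2`, `P i j = p (j-i+1)` for
`1 ≤ i ≤ C-1` and `i-1 ≤ j ≤ C-2`, `P i j = 0` for `j < i-1`, and
`P i (C-1) = h (C-i)` where `h k = ∑_{j ≥ k} p j`. -/
noncomputable def moranP (C : ℕ) (p : ℕ → ℝ) : Matrix (Fin C) (Fin C) ℝ :=
  Matrix.of fun i j =>
    if (j : ℕ) = C - 1 then ∑' k : ℕ, p (C - (i : ℕ) + k)
    else if (i : ℕ) = 0 ∧ (j : ℕ) = 0 then p 0 + p 1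
    else if (i : ℕ) ≤ (j : ℕ) + 1 then p ((j : ℕ) + 1 - (i : ℕ))
    else 0


namespace MoranAux

open Finset Matrix

variable {p : ℕ → ℝ}

lemma tail_hasSum (hpsum : HasSum p 1) (t : ℕ) :
    HasSum (fun k => p (t + k)) (1 - ∑ k ∈ Finset.range t, p k) := by
  have h2 : HasSum (fun k => p (k + t)) (1 - ∑ k ∈ Finset.range t, p k) := by
    rw [hasSum_nat_add_iff t]; simpa using hpsum
  simpa [add_comm] using h2

lemma tail_eq (hpsum : HasSum p 1) (t : ℕ) :
    ∑' k, p (t + k) = 1 - ∑ k ∈ Finset.range t, p k := (tail_hasSum hpsum t).tsum_eq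

lemma le_tail (hpnn : ∀ j, 0 ≤ p j) (hpsum : HasSum p 1) {t j : ℕ} (hj : t ≤ j) :
    p j ≤ ∑' k, p (t + k) := by
  have hs : Summable (fun k => p (t + k)) := (tail_hasSum hpsum t).summable
  have := Summable.le_tsum hs (j - t) (fun k _ => hpnn _)
  rwa [show t + (j - t) = j by omega] at this

lemma tail_nonneg (hpnn : ∀ j, 0 ≤ p j) (t : ℕ) : (0:ℝ) ≤ ∑' k, p (t + k) :=
  tsum_nonneg fun _ => hpnn _

variable {C : ℕ}

lemma moranP_nonneg (hpnn : ∀ j, 0 ≤ p j) (i j : Fin C) : 0 ≤ moranP C p i j := by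
  simp only [moranP, Matrix.of_apply]
  split_ifs with h1 h2 h3
  · exact tail_nonneg hpnn _
  · exact add_nonneg (hpnn 0) (hpnn 1)
  · exact hpnn _
  · exact le_refl 0

lemma sum_shift (f : ℕ → ℝ) (a n : ℕ) (ha : a ≤ n) :
    ∑ j ∈ range n, (if a ≤ j then f (j - a) else 0) = ∑ k ∈ range (n - a), f k := by
  have h1 : ∑ j ∈ Ico 0 a, (if a ≤ j then f (j - a) else 0) = 0 := by
    apply Finset.sum_eq_zero
    intro x hx
    simp only [mem_Ico] at hx
    rw [if_neg (by omega)]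
  have h2 : ∑ j ∈ range n, (if a ≤ j then f (j - a) else 0)
      = ∑ j ∈ Ico a n, (if a ≤ j then f (j - a) else 0) := by
    rw [range_eq_Ico, ← Finset.sum_Ico_consecutive _ (Nat.zero_le a) ha, h1, zero_add]
  rw [h2, Finset.sum_Ico_eq_sum_range]
  apply Finset.sum_congr rfl
  intro x _
  rw [if_pos (by omega), show a + x - a = x by omega]

lemma moranP_rowsum (hpsum : HasSum p 1) (i : Fin (C + 2)) :
    ∑ j, moranP (C + 2) p i j = 1 := by
  rw [Fin.sum_univ_castSucc]
  have hlast : moranP (C+2) p i (Fin.last (C+1)) = ∑' k, p ((C + 2 - (i:ℕ)) + k) := by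
    simp [moranP]
  have hmain : ∑ j : Fin (C+1), moranP (C+2) p i (Fin.castSucc j)
      = ∑ k ∈ range (C + 2 - (i:ℕ)), p k := by
    have hic : (i:ℕ) < C + 2 := i.isLt
    rcases Nat.eq_zero_or_pos (i:ℕ) with hi0 | hipos
    · have hF : ∀ j : Fin (C+1), moranP (C+2) p i (Fin.castSucc j)
          = (fun j : ℕ => if j = 0 then p 0 + p 1 else p (j+1)) ((j : ℕ)) := by
        intro j
        have hj : (Fin.castSucc j : ℕ) = (j : ℕ) := rfl
        have hjc : (j:ℕ) < C + 1 := j.isLt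
        simp only [moranP, Matrix.of_apply, hj]
        rw [if_neg (by omega)]
        by_cases hj0 : (j:ℕ) = 0
        · rw [if_pos ⟨hi0, hj0⟩, if_pos hj0]
        · rw [if_neg (fun hcc => hj0 hcc.2), if_pos (by omega), if_neg hj0, hi0,
            Nat.sub_zero]
      rw [Finset.sum_congr rfl (fun j _ => hF j),
        Fin.sum_univ_eq_sum_range (fun j : ℕ => if j = 0 then p 0 + p 1 else p (j+1)) (C+1),
        Finset.sum_range_succ' (fun j : ℕ => if j = 0 then p 0 + p 1 else p (j+1)) C]
      simp only [Nat.succ_ne_zero, if_neg, if_pos, Nat.add_eq_zero, and_false, ite_false,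
        ite_true]
      rw [hi0, Nat.sub_zero, Finset.sum_range_succ' (fun k => p k) (C+1),
        Finset.sum_range_succ' (fun k => p (k+1)) C]
      ring
    · have hF : ∀ j : Fin (C+1), moranP (C+2) p i (Fin.castSucc j)
          = (fun j : ℕ => if (i:ℕ) - 1 ≤ j then p (j - ((i:ℕ) - 1)) else 0) ((j:ℕ)) := by
        intro j
        have hj : (Fin.castSucc j : ℕ) = (j : ℕ) := rfl
        have hjc : (j:ℕ) < C + 1 := j.isLt
        simp only [moranP, Matrix.of_apply, hj]
        rw [if_neg (by omega), if_neg (by omega)]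
        rcases le_or_gt ((i:ℕ) - 1) (j:ℕ) with h | h
        · rw [if_pos (by omega), if_pos h,
            show (j:ℕ) + 1 - (i:ℕ) = (j:ℕ) - ((i:ℕ)-1) by omega]
        · rw [if_neg (by omega), if_neg (by omega)]
      rw [Finset.sum_congr rfl (fun j _ => hF j),
        Fin.sum_univ_eq_sum_range (fun j : ℕ =>
          if (i:ℕ) - 1 ≤ j then p (j - ((i:ℕ) - 1)) else 0) (C+1),
        sum_shift p ((i:ℕ)-1) (C+1) (by omega),
        show C + 1 - ((i:ℕ) - 1) = C + 2 - (i:ℕ) by omega]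
  rw [hmain, hlast, tail_eq hpsum]
  ring


section Generic

variable {m : ℕ}

lemma mul_pos_entry (A B : Matrix (Fin m) (Fin m) ℝ) (hA : ∀ i j, 0 ≤ A i j)
    (hB : ∀ i j, 0 ≤ B i j) {i k j : Fin m} (h1 : 0 < A i k) (h2 : 0 < B k j) :
    0 < (A * B) i j := by
  rw [Matrix.mul_apply]
  refine lt_of_lt_of_le (mul_pos h1 h2) ?_
  exact Finset.single_le_sum (f := fun l => A i l * B l j)
    (fun l _ => mul_nonneg (hA _ _) (hB _ _)) (Finset.mem_univ k)

lemma pow_entry_nonneg (A : Matrix (Fin m) (Fin m) ℝ) (hA : ∀ i j, 0 ≤ A i j) :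
    ∀ n i j, 0 ≤ (A ^ n) i j := by
  intro n
  induction n with
  | zero => intro i j; rw [pow_zero]; by_cases h : i = j <;> simp [Matrix.one_apply, h]
  | succ n ih =>
    intro i j
    rw [pow_succ, Matrix.mul_apply]
    exact Finset.sum_nonneg fun k _ => mul_nonneg (ih i k) (hA k j)

lemma pow_pos_trans (A : Matrix (Fin m) (Fin m) ℝ) (hA : ∀ i j, 0 ≤ A i j)
    {a b : ℕ} {i k j : Fin m} (h1 : 0 < (A ^ a) i k) (h2 : 0 < (A ^ b) k j) :
    0 < (A ^ (a + b)) i j := by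
  rw [pow_add]
  exact mul_pos_entry _ _ (pow_entry_nonneg A hA a) (pow_entry_nonneg A hA b) h1 h2

lemma pow_rowsum_one (A : Matrix (Fin m) (Fin m) ℝ) (hrow : ∀ i, ∑ j, A i j = 1) :
    ∀ n i, ∑ j, (A ^ n) i j = 1 := by
  intro n
  induction n with
  | zero => intro i; simp [Matrix.one_apply]
  | succ n ih =>
    intro i
    simp only [pow_succ, Matrix.mul_apply]
    rw [Finset.sum_comm]
    calc ∑ k, ∑ j, (A ^ n) i k * A k j = ∑ k, (A ^ n) i k * ∑ j, A k j := by
          simp [Finset.mul_sum]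
      _ = 1 := by simp only [hrow, mul_one]; exact ih i

lemma vecMul_sub_apply (Q : Matrix (Fin m) (Fin m) ℝ) (u v : Fin m → ℝ) (j : Fin m) :
    Matrix.vecMul u Q j - Matrix.vecMul v Q j = ∑ i, (u i - v i) * Q i j := by
  simp [Matrix.vecMul, dotProduct, sub_mul, Finset.sum_sub_distrib]

lemma dist_vecMul_le (Q : Matrix (Fin m) (Fin m) ℝ) (hQ : ∀ i j, 0 ≤ Q i j)
    (hrow : ∀ i, ∑ j, Q i j = 1) (u v : Fin m → ℝ) :
    ∑ j, |Matrix.vecMul u Q j - Matrix.vecMul v Q j| ≤ ∑ i, |u i - v i| := by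
  calc ∑ j, |Matrix.vecMul u Q j - Matrix.vecMul v Q j|
      = ∑ j, |∑ i, (u i - v i) * Q i j| := by simp [vecMul_sub_apply]
    _ ≤ ∑ j, ∑ i, |u i - v i| * Q i j := by
        refine Finset.sum_le_sum fun j _ => ?_
        refine le_trans (Finset.abs_sum_le_sum_abs _ _) ?_
        refine Finset.sum_le_sum fun i _ => ?_
        rw [abs_mul, abs_of_nonneg (hQ i j)]
    _ = ∑ i, |u i - v i| * ∑ j, Q i j := by rw [Finset.sum_comm]; simp [Finset.mul_sum]
    _ = ∑ i, |u i - v i| := by simp [hrow]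

lemma dist_vecMul_contract (Q : Matrix (Fin m) (Fin m) ℝ) {ε : ℝ} (hε : 0 ≤ ε)
    (hQ : ∀ i j, ε ≤ Q i j) (hrow : ∀ i, ∑ j, Q i j = 1) (u v : Fin m → ℝ)
    (huv : ∑ i, u i = ∑ i, v i) :
    ∑ j, |Matrix.vecMul u Q j - Matrix.vecMul v Q j|
      ≤ (1 - m * ε) * ∑ i, |u i - v i| := by
  have hw : ∑ i, (u i - v i) = 0 := by rw [Finset.sum_sub_distrib, huv, sub_self]
  have key : ∀ j, Matrix.vecMul u Q j - Matrix.vecMul v Q j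
      = ∑ i, (u i - v i) * (Q i j - ε) := by
    intro j
    rw [vecMul_sub_apply]
    rw [Finset.sum_congr rfl (fun i _ => mul_sub (u i - v i) (Q i j) ε),
      Finset.sum_sub_distrib, ← Finset.sum_mul, hw, zero_mul, sub_zero]
  calc ∑ j, |Matrix.vecMul u Q j - Matrix.vecMul v Q j|
      = ∑ j, |∑ i, (u i - v i) * (Q i j - ε)| := by simp [key]
    _ ≤ ∑ j, ∑ i, |u i - v i| * (Q i j - ε) := by
        refine Finset.sum_le_sum fun j _ => ?_
        refine le_trans (Finset.abs_sum_le_sum_abs _ _) ?_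
        refine Finset.sum_le_sum fun i _ => ?_
        rw [abs_mul, abs_of_nonneg (sub_nonneg.2 (hQ i j))]
    _ = ∑ i, |u i - v i| * ∑ j, (Q i j - ε) := by
        rw [Finset.sum_comm]
        exact Finset.sum_congr rfl fun i _ => (Finset.mul_sum _ _ _).symm
    _ = ∑ i, |u i - v i| * (1 - m * ε) := by
        refine Finset.sum_congr rfl fun i _ => ?_
        rw [Finset.sum_sub_distrib, hrow, Finset.sum_const]
        simp [Finset.card_univ, mul_comm]
    _ = (1 - m * ε) * ∑ i, |u i - v i| := by rw [← Finset.sum_mul]; ring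


lemma sum_vecMul (A : Matrix (Fin m) (Fin m) ℝ) (hrow : ∀ i, ∑ j, A i j = 1)
    (u : Fin m → ℝ) : ∑ j, Matrix.vecMul u A j = ∑ i, u i := by
  simp only [Matrix.vecMul, dotProduct]
  rw [Finset.sum_comm]
  calc ∑ i, ∑ j, u i * A i j = ∑ i, u i * ∑ j, A i j := by
        exact Finset.sum_congr rfl fun i _ => (Finset.mul_sum _ _ _).symm
    _ = ∑ i, u i := by simp [hrow]

/-- Main convergence lemma: if `A` is row-stochastic with nonneg entries, some power
has all entries `≥ ε > 0`, `π` is stationary with sum 1, and `ν` evolves by `A` with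
sum 1, then `ν n z → π z`. -/
lemma tendsto_of_contraction (A : Matrix (Fin m) (Fin m) ℝ)
    (hAnn : ∀ i j, 0 ≤ A i j) (hrow : ∀ i, ∑ j, A i j = 1)
    {s : ℕ} (hs : 0 < s) {ε : ℝ} (hε : 0 < ε) (hQ : ∀ i j, ε ≤ (A ^ s) i j)
    (him : 0 < m)
    (π : Fin m → ℝ) (hπ1 : ∑ i, π i = 1) (hπP : Matrix.vecMul π A = π)
    (ν : ℕ → Fin m → ℝ) (hν1 : ∑ i, ν 0 i = 1)
    (hνrec : ∀ n, ν (n + 1) = Matrix.vecMul (ν n) A) (z : Fin m) :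
    Tendsto (fun n => ν n z) atTop (nhds (π z)) := by
  have hrowQ : ∀ i, ∑ j, (A ^ s) i j = 1 := pow_rowsum_one A hrow s
  -- sums are preserved
  have hsum : ∀ n, ∑ i, ν n i = 1 := by
    intro n
    induction n with
    | zero => exact hν1
    | succ n ih => rw [hνrec, sum_vecMul A hrow, ih]
  -- π is fixed by powers; ν iterates
  have hπpow : ∀ k, Matrix.vecMul π (A ^ k) = π := by
    intro k
    induction k with
    | zero => simp
    | succ k ih => rw [pow_succ, ← Matrix.vecMul_vecMul, ih, hπP]
  have hνpow : ∀ k t, ν (k + t) = Matrix.vecMul (ν k) (A ^ t) := by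
    intro k t
    induction t with
    | zero => simp
    | succ t ih => rw [← Nat.add_assoc, hνrec, ih, Matrix.vecMul_vecMul, ← pow_succ]
  set D : ℕ → ℝ := fun n => ∑ j, |ν n j - π j| with hD
  set θ : ℝ := 1 - m * ε with hθ
  have hθ1 : θ < 1 := by
    have : (0:ℝ) < m * ε := by positivity
    simp [hθ]; linarith
  have hθ0 : 0 ≤ θ := by
    have h1 : (m : ℝ) * ε = ∑ _j : Fin m, ε := by
      simp [Finset.sum_const, Finset.card_univ]
    have h2 : ∑ _j : Fin m, ε ≤ ∑ j, (A ^ s) ⟨0, him⟩ j :=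
      Finset.sum_le_sum fun j _ => hQ _ j
    rw [hrowQ] at h2
    rw [hθ]; rw [h1]; linarith
  have hDnn : ∀ n, 0 ≤ D n := fun n => Finset.sum_nonneg fun j _ => abs_nonneg _
  have hDmono : ∀ n, D (n + 1) ≤ D n := by
    intro n
    have := dist_vecMul_le A hAnn hrow (ν n) π
    rw [hπP] at this
    simpa [hD, hνrec n] using this
  have hDle0 : ∀ n, D n ≤ D 0 := by
    intro n
    induction n with
    | zero => exact le_refl _
    | succ n ih => exact le_trans (hDmono n) ih
  have hDcon : ∀ k, D (k + s) ≤ θ * D k := by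
    intro k
    have := dist_vecMul_contract (A ^ s) hε.le hQ hrowQ (ν k) π (by rw [hsum, hπ1])
    rw [hπpow s] at this
    simpa [hD, hνpow k s, hθ] using this
  have hbound : ∀ n, D n ≤ θ ^ (n / s) * D 0 := by
    intro n
    induction n using Nat.strong_induction_on with
    | _ n ih =>
      rcases lt_or_ge n s with h | h
      · rw [Nat.div_eq_of_lt h, pow_zero, one_mul]; exact hDle0 n
      · have h1 : n = (n - s) + s := by omega
        have h2 : D n ≤ θ * D (n - s) := by
          have := hDcon (n - s)
          rwa [show n - s + s = n by omega] at this
        have h3 : D (n - s) ≤ θ ^ ((n - s) / s) * D 0 := ih (n - s) (by omega)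
        have h4 : n / s = (n - s) / s + 1 := by
          rw [Nat.div_eq_sub_div hs h]
        calc D n ≤ θ * (θ ^ ((n - s) / s) * D 0) :=
              le_trans h2 (mul_le_mul_of_nonneg_left h3 hθ0)
          _ = θ ^ ((n - s) / s + 1) * D 0 := by ring
          _ = θ ^ (n / s) * D 0 := by rw [h4]
  -- conclude
  have hdiv : Tendsto (fun n : ℕ => n / s) atTop atTop := by
    refine tendsto_atTop_atTop.2 fun b => ⟨b * s, fun n hn => ?_⟩
    exact (Nat.le_div_iff_mul_le hs).2 hn
  have hg : Tendsto (fun n : ℕ => θ ^ (n / s) * D 0) atTop (nhds 0) := by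
    have := ((tendsto_pow_atTop_nhds_zero_of_lt_one hθ0 hθ1).comp hdiv).mul_const (D 0)
    simpa using this
  have habs : Tendsto (fun n => |ν n z - π z|) atTop (nhds 0) := by
    refine squeeze_zero (fun n => abs_nonneg _) (fun n => ?_) hg
    calc |ν n z - π z| ≤ D n :=
          Finset.single_le_sum (f := fun j => |ν n j - π j|)
            (fun j _ => abs_nonneg _) (Finset.mem_univ z)
      _ ≤ θ ^ (n / s) * D 0 := hbound n
  have := (tendsto_zero_iff_abs_tendsto_zero _).2 habs
  have h := tendsto_sub_nhds_zero_iff.1 this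
  exact h


end Generic

lemma exists_ge_two_pos (hpnn : ∀ j, 0 ≤ p j) (hpsum : HasSum p 1)
    (hp01 : p 0 + p 1 < 1) : ∃ j0, 2 ≤ j0 ∧ 0 < p j0 := by
  by_contra h
  push_neg at h
  have hz : ∀ k, p (2 + k) = 0 := fun k =>
    le_antisymm (h (2 + k) (by omega)) (hpnn _)
  have : (0:ℝ) = 1 - ∑ k ∈ Finset.range 2, p k := by
    rw [← tail_eq hpsum 2]
    simp [hz]
  simp [Finset.sum_range_succ] at this
  linarith

lemma entry00_pos (hpnn : ∀ j, 0 ≤ p j) (hp0 : 0 < p 0) {i j : Fin (C+2)}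
    (hi : (i:ℕ) = 0) (hj : (j:ℕ) = 0) : 0 < moranP (C+2) p i j := by
  simp only [moranP, Matrix.of_apply]
  rw [if_neg (by omega), if_pos ⟨hi, hj⟩]
  have := hpnn 1; linarith

lemma entry_down_pos (hp0 : 0 < p 0) {i j : Fin (C+2)}
    (hij : (i:ℕ) = (j:ℕ) + 1) : 0 < moranP (C+2) p i j := by
  have hjlt : (j:ℕ) < C + 2 := j.isLt
  have hilt : (i:ℕ) < C + 2 := i.isLt
  simp only [moranP, Matrix.of_apply]
  rw [if_neg (by omega), if_neg (by omega), if_pos (by omega),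
    show (j:ℕ) + 1 - (i:ℕ) = 0 by omega]
  exact hp0

lemma entry_lastlast_pos (hpnn : ∀ j, 0 ≤ p j) (hpsum : HasSum p 1) (hp01 : p 0 + p 1 < 1)
    {i j : Fin (C+2)} (hi : (i:ℕ) = C + 1) (hj : (j:ℕ) = C + 1) :
    0 < moranP (C+2) p i j := by
  simp only [moranP, Matrix.of_apply]
  rw [if_pos (by omega), show C + 2 - (i:ℕ) = 1 by omega, tail_eq hpsum 1]
  have h0 := hpnn 0
  have h1 := hpnn 1
  simp [Finset.sum_range_one]
  linarith

lemma entry_up_pos (hpnn : ∀ j, 0 ≤ p j) (hpsum : HasSum p 1) {j0 : ℕ}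
    (hj0 : 2 ≤ j0) (hpj0 : 0 < p j0) (i : Fin (C+2)) :
    0 < moranP (C+2) p i ⟨min ((i:ℕ) + j0 - 1) (C+1), by omega⟩ := by
  have hilt : (i:ℕ) < C + 2 := i.isLt
  simp only [moranP, Matrix.of_apply]
  rcases le_or_gt (C+1) ((i:ℕ) + j0 - 1) with h | h
  · rw [if_pos (show (min ((i:ℕ) + j0 - 1) (C+1) : ℕ) = C + 2 - 1 by omega)]
    calc (0:ℝ) < p j0 := hpj0
      _ ≤ ∑' k, p ((C + 2 - (i:ℕ)) + k) := le_tail hpnn hpsum (by omega)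
  · rw [if_neg (show ¬(min ((i:ℕ) + j0 - 1) (C+1) : ℕ) = C + 2 - 1 by omega),
      if_neg (show ¬((i:ℕ) = 0 ∧ (min ((i:ℕ) + j0 - 1) (C+1) : ℕ) = 0) by omega),
      if_pos (show (i:ℕ) ≤ (min ((i:ℕ) + j0 - 1) (C+1) : ℕ) + 1 by omega)]
    rw [show (min ((i:ℕ) + j0 - 1) (C+1) : ℕ) + 1 - (i:ℕ) = j0 by omega]
    exact hpj0

lemma descend_pos (hpnn : ∀ j, 0 ≤ p j) (hp0 : 0 < p 0) :
    ∀ d (i j : Fin (C+2)), (i:ℕ) = (j:ℕ) + d → 0 < ((moranP (C+2) p) ^ d) i j := by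
  intro d
  induction d with
  | zero =>
    intro i j hij
    have : i = j := Fin.ext (by omega)
    rw [this, pow_zero, Matrix.one_apply_eq]; norm_num
  | succ d ih =>
    intro i j hij
    have hilt : (i:ℕ) < C + 2 := i.isLt
    have hk : (i:ℕ) - 1 < C + 2 := by omega
    rw [show d + 1 = 1 + d by omega, pow_add, pow_one]
    refine mul_pos_entry _ _ (moranP_nonneg hpnn)
      (pow_entry_nonneg _ (moranP_nonneg hpnn) d) (k := ⟨(i:ℕ) - 1, hk⟩)
      (entry_down_pos hp0 (show (i:ℕ) = (i:ℕ) - 1 + 1 by omega))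
      (ih _ _ (show (i:ℕ) - 1 = (j:ℕ) + d by omega))

lemma loop_pos (hpnn : ∀ j, 0 ≤ p j) {i : Fin (C+2)} (hi : 0 < moranP (C+2) p i i) :
    ∀ n, 0 < ((moranP (C+2) p) ^ n) i i := by
  intro n
  induction n with
  | zero => rw [pow_zero, Matrix.one_apply_eq]; norm_num
  | succ n ih =>
    rw [pow_succ]
    exact mul_pos_entry _ _ (pow_entry_nonneg _ (moranP_nonneg hpnn) n) (moranP_nonneg hpnn) ih hi

lemma climb_pos (hpnn : ∀ j, 0 ≤ p j) (hpsum : HasSum p 1) {j0 : ℕ}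
    (hj0 : 2 ≤ j0) (hpj0 : 0 < p j0) :
    ∀ n, ∃ s : Fin (C+2), min n (C+1) ≤ (s:ℕ) ∧
      0 < ((moranP (C+2) p) ^ n) ⟨0, by omega⟩ s := by
  intro n
  induction n with
  | zero =>
    refine ⟨⟨0, by omega⟩, by simp, ?_⟩
    rw [pow_zero, Matrix.one_apply_eq]; norm_num
  | succ n ih =>
    obtain ⟨s, hs, hpos⟩ := ih
    have hslt : (s:ℕ) < C + 2 := s.isLt
    refine ⟨⟨min ((s:ℕ) + j0 - 1) (C+1), by omega⟩, by simp; omega, ?_⟩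
    rw [pow_succ]
    exact mul_pos_entry _ _ (pow_entry_nonneg _ (moranP_nonneg hpnn) n) (moranP_nonneg hpnn)
      hpos (entry_up_pos hpnn hpsum hj0 hpj0 s)

lemma pow_pos_all (hpnn : ∀ j, 0 ≤ p j) (hpsum : HasSum p 1) (hp0 : 0 < p 0)
    (hp01 : p 0 + p 1 < 1) (i j : Fin (C+2)) :
    0 < ((moranP (C+2) p) ^ (3 * (C + 2))) i j := by
  obtain ⟨j0, hj0, hpj0⟩ := exists_ge_two_pos hpnn hpsum hp01
  have hilt : (i:ℕ) < C + 2 := i.isLt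
  have hjlt : (j:ℕ) < C + 2 := j.isLt
  set pad := 3 * (C + 2) - (i:ℕ) - (C + 1) - (C + 1 - (j:ℕ)) with hpad
  have hsplit : 3 * (C + 2) = (i:ℕ) + (pad + ((C + 1) + (C + 1 - (j:ℕ)))) := by omega
  rw [hsplit]
  have hzero : (⟨0, by omega⟩ : Fin (C+2)) = ⟨0, by omega⟩ := rfl
  -- i ⟶ 0 in i steps
  have h1 : 0 < ((moranP (C+2) p) ^ (i:ℕ)) i ⟨0, by omega⟩ :=
    descend_pos hpnn hp0 _ _ _ (by simp)
  -- loop at 0 for pad steps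
  have h2 : 0 < ((moranP (C+2) p) ^ pad) (⟨0, by omega⟩ : Fin (C+2)) ⟨0, by omega⟩ :=
    loop_pos hpnn (entry00_pos hpnn hp0 rfl rfl) pad
  -- climb 0 ⟶ last in C+1 steps
  have h3 : 0 < ((moranP (C+2) p) ^ (C+1)) (⟨0, by omega⟩ : Fin (C+2)) ⟨C+1, by omega⟩ := by
    obtain ⟨s, hs, hpos⟩ := climb_pos (C := C) hpnn hpsum hj0 hpj0 (C+1)
    have : s = ⟨C+1, by omega⟩ := Fin.ext (by simp at hs ⊢; omega)
    rwa [this] at hpos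
  -- descend last ⟶ j
  have h4 : 0 < ((moranP (C+2) p) ^ (C + 1 - (j:ℕ))) (⟨C+1, by omega⟩ : Fin (C+2)) j :=
    descend_pos hpnn hp0 _ _ _ (by simp; omega)
  exact pow_pos_trans _ (moranP_nonneg hpnn) h1
    (pow_pos_trans _ (moranP_nonneg hpnn) h2
      (pow_pos_trans _ (moranP_nonneg hpnn) h3 h4))


end MoranAux

def zfun (C : ℕ) : ℕ → (ℕ → ℕ) → ℕ → ℕ
  | 0, _, z0 => z0
  | n+1, y, z0 => min (zfun C n y z0 + y n - 1) (C - 1)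

lemma zfun_congr (C : ℕ) : ∀ (n : ℕ) (y y' : ℕ → ℕ) (z0 : ℕ),
    (∀ k, k < n → y k = y' k) → zfun C n y z0 = zfun C n y' z0 := by
  intro n
  induction n with
  | zero => intro y y' z0 _; rfl
  | succ n ih =>
    intro y y' z0 h
    show min (zfun C n y z0 + y n - 1) (C - 1) = min (zfun C n y' z0 + y' n - 1) (C - 1)
    rw [ih y y' z0 (fun k hk => h k (by omega)), h n (by omega)]

lemma zfun_measurable (C n : ℕ) : Measurable (fun w : (ℕ → ℕ) × ℕ => zfun C n w.1 w.2) := by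
  induction n with
  | zero => exact measurable_snd
  | succ n ih =>
    exact ((ih.add ((measurable_pi_apply n).comp measurable_fst)).sub
      measurable_const).min measurable_const

lemma indep_YZ {Ω : Type} [MeasurableSpace Ω] {μ : Measure Ω} (C : ℕ) (Y Z : ℕ → Ω → ℕ)
    (hYmeas : ∀ n, Measurable (Y n)) (hZ0meas : Measurable (Z 0))
    (hIndep : iIndepFun
      (fun i : Option ℕ => i.elim (Z 0) Y) μ)
    (hrec : ∀ n ω, Z (n + 1) ω = min (Z n ω + Y n ω - 1) (C - 1)) (n : ℕ) :
    IndepFun (Y n) (Z n) μ := by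
  classical
  have hzfun_eq : ∀ m ω, Z m ω = zfun C m (fun k => Y k ω) (Z 0 ω) := by
    intro m
    induction m with
    | zero => intro ω; rfl
    | succ m ih =>
      intro ω
      rw [hrec m ω, ih ω]
      rfl
  set S : Finset (Option ℕ) := {some n} with hS
  set T : Finset (Option ℕ) := insert none ((Finset.range n).image some) with hT
  have hST : Disjoint S T := by
    simp only [hS, hT, Finset.disjoint_singleton_left, Finset.mem_insert,
      Finset.mem_image, Finset.mem_range]
    push_neg
    exact ⟨by simp, fun k hk => by simp; omega⟩
  have hmeas : ∀ i : Option ℕ, Measurable ((fun i : Option ℕ => i.elim (Z 0) Y) i) := by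
    rintro (_ | k)
    · exact hZ0meas
    · exact hYmeas k
  have hbig := hIndep.indepFun_finset S T hST hmeas
  have hnoneT : (none : Option ℕ) ∈ T := by simp [hT]
  set φ : (∀ _ : {x // x ∈ S}, ℕ) → ℕ := fun v => v ⟨some n, by simp [hS]⟩ with hφ
  set ψ : (∀ _ : {x // x ∈ T}, ℕ) → ℕ := fun v =>
    zfun C n (fun k => if h : some k ∈ T then v ⟨some k, h⟩ else 0) (v ⟨none, hnoneT⟩) with hψ
  have hφm : Measurable φ := measurable_pi_apply _
  have hψm : Measurable ψ := by
    refine (zfun_measurable C n).comp (Measurable.prodMk ?_ (measurable_pi_apply _))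
    refine measurable_pi_lambda _ fun k => ?_
    show Measurable fun v : (∀ _ : {x // x ∈ T}, ℕ) =>
      if h' : some k ∈ T then v ⟨some k, h'⟩ else 0
    by_cases h : some k ∈ T
    · have e : (fun v : (∀ _ : {x // x ∈ T}, ℕ) => if h' : some k ∈ T then v ⟨some k, h'⟩ else 0)
          = fun v => v ⟨some k, h⟩ := by funext v; rw [dif_pos h]
      rw [e]; exact measurable_pi_apply _
    · have e : (fun v : (∀ _ : {x // x ∈ T}, ℕ) => if h' : some k ∈ T then v ⟨some k, h'⟩ else 0)
          = fun _ => 0 := by funext v; rw [dif_neg h]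
      rw [e]; exact measurable_const
  have := hbig.comp hφm hψm
  have e1 : φ ∘ (fun a (i : {x // x ∈ S}) => (fun i : Option ℕ => i.elim (Z 0) Y) i a)
      = Y n := by
    funext ω; rfl
  have e2 : ψ ∘ (fun a (i : {x // x ∈ T}) => (fun i : Option ℕ => i.elim (Z 0) Y) i a)
      = Z n := by
    funext ω
    show zfun C n (fun k => if h : some k ∈ T then (Option.elim (some k) (Z 0) Y) ω else 0)
      ((Option.elim none (Z 0) Y) ω) = Z n ω
    rw [hzfun_eq n ω]
    show zfun C n (fun k => if h : some k ∈ T then Y k ω else 0) (Z 0 ω)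
      = zfun C n (fun k => Y k ω) (Z 0 ω)
    apply zfun_congr
    intro k hk
    rw [dif_pos (by simp [hT]; omega)]
  rwa [e1, e2] at this

/-- for every `n`, the inflow `Y n` and the storage level `Z n` are independent,
with joint pmf `p y · ℙ(Z n = z)`; consequently the joint process `(Y n, Z n)` has limiting
distribution `p y · π z`, where `π` is the unique stationary distribution of the Moran matrix. -/
theorem stmt2
    {Ω : Type} [MeasurableSpace Ω] (μ : Measure Ω) [IsProbabilityMeasure μ]
    (C : ℕ) (hC : 2 ≤ C) (p : ℕ → ℝ) (hpnn : ∀ j, 0 ≤ p j) (hpsum : HasSum p 1)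
    (Y Z : ℕ → Ω → ℕ)
    (hYmeas : ∀ n, Measurable (Y n)) (hZ0meas : Measurable (Z 0))
    (hYdist : ∀ n j, (μ {ω | Y n ω = j}).toReal = p j)
    (hIndep : iIndepFun
      (fun i : Option ℕ => i.elim (Z 0) Y) μ)
    (hZ0lt : ∀ ω, Z 0 ω < C)
    (hrec : ∀ n ω, Z (n + 1) ω = min (Z n ω + Y n ω - 1) (C - 1))
    (hp0 : 0 < p 0) (hp01 : p 0 + p 1 < 1)
    (π : Fin C → ℝ) (hπnn : ∀ i, 0 ≤ π i) (hπ1 : ∑ i, π i = 1)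
    (hπP : Matrix.vecMul π (moranP C p) = π) :
    (∀ n, IndepFun (Y n) (Z n) μ) ∧
    (∀ n y z, (μ {ω | Y n ω = y ∧ Z n ω = z}).toReal
      = p y * (μ {ω | Z n ω = z}).toReal) ∧
    (∀ y : ℕ, ∀ z : Fin C,
      Tendsto (fun n => (μ {ω | Y n ω = y ∧ Z n ω = (z : ℕ)}).toReal)
        atTop (nhds (p y * π z))) := by
  classical
  obtain ⟨c, rfl⟩ : ∃ c, C = c + 2 := ⟨C - 2, by omega⟩
  have hindep : ∀ n, IndepFun (Y n) (Z n) μ :=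
    indep_YZ (c+2) Y Z hYmeas hZ0meas hIndep hrec
  have hZmeas : ∀ n, Measurable (Z n) := by
    intro n
    induction n with
    | zero => exact hZ0meas
    | succ n ih =>
      have he : Z (n+1) = fun ω => min (Z n ω + Y n ω - 1) (c + 2 - 1) := funext (hrec n)
      rw [he]
      exact ((ih.add (hYmeas n)).sub measurable_const).min measurable_const
  have hfin : ∀ s : Set Ω, μ s ≠ ⊤ := fun s => measure_ne_top μ s
  have hYpre : ∀ n (a : ℕ), Y n ⁻¹' {a} = {ω | Y n ω = a} := by
    intro n a; ext ω; simp
  have hZpre : ∀ n (a : ℕ), Z n ⁻¹' {a} = {ω | Z n ω = a} := by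
    intro n a; ext ω; simp
  have hjoint : ∀ n y z, (μ {ω | Y n ω = y ∧ Z n ω = z}).toReal
      = p y * (μ {ω | Z n ω = z}).toReal := by
    intro n y z
    have h := (hindep n).measure_inter_preimage_eq_mul (f := Y n) (g := Z n) {y} {z}
      (measurableSet_singleton _) (measurableSet_singleton _)
    have hset : {ω | Y n ω = y ∧ Z n ω = z} = Y n ⁻¹' {y} ∩ Z n ⁻¹' {z} := by
      ext ω; simp
    rw [hset, h, ENNReal.toReal_mul, hYpre, hZpre, hYdist n y]
  refine ⟨hindep, hjoint, ?_⟩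
  intro y z
  have hZlt : ∀ n ω, Z n ω < c + 2 := by
    intro n
    induction n with
    | zero => exact hZ0lt
    | succ n ih => intro ω; rw [hrec n ω]; omega
  set A := moranP (c+2) p with hA
  have hAnn : ∀ i j, 0 ≤ A i j := MoranAux.moranP_nonneg hpnn
  have hrowA : ∀ i, ∑ j, A i j = 1 := fun i => MoranAux.moranP_rowsum hpsum i
  set ν : ℕ → Fin (c+2) → ℝ := fun n i => (μ {ω | Z n ω = (i:ℕ)}).toReal with hν
  -- the states partition Ω
  have hcover : ∀ n, (⋃ i : Fin (c+2), Z n ⁻¹' {(i:ℕ)}) = Set.univ := by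
    intro n
    ext ω
    simp only [Set.mem_iUnion, Set.mem_preimage, Set.mem_singleton_iff, Set.mem_univ,
      iff_true]
    exact ⟨⟨Z n ω, hZlt n ω⟩, rfl⟩
  have hdisj : ∀ n, Pairwise (Function.onFun Disjoint
      (fun i : Fin (c+2) => Z n ⁻¹' {(i:ℕ)})) := by
    intro n i j hij
    apply Set.disjoint_left.2
    intro ω h1 h2
    simp only [Set.mem_preimage, Set.mem_singleton_iff] at h1 h2
    exact hij (Fin.ext (h1 ▸ h2 ▸ rfl))
  have hν1 : ∑ i, ν 0 i = 1 := by
    have h1 : μ (⋃ i : Fin (c+2), Z 0 ⁻¹' {(i:ℕ)})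
        = ∑' i : Fin (c+2), μ (Z 0 ⁻¹' {(i:ℕ)}) :=
      measure_iUnion (hdisj 0) (fun i => hZ0meas (measurableSet_singleton _))
    rw [hcover 0, measure_univ, tsum_fintype] at h1
    have h2 := congrArg ENNReal.toReal h1
    rw [ENNReal.toReal_one, ENNReal.toReal_sum (fun i _ => hfin _)] at h2
    simp only [hZpre] at h2
    exact h2.symm
  -- one-step recursion
  have hνrec : ∀ n, ν (n+1) = Matrix.vecMul (ν n) A := by
    intro n
    funext z
    have hzlt : (z:ℕ) < c + 2 := z.isLt
    set Aset : Fin (c+2) → Set ℕ :=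
      fun i => {v : ℕ | min ((i:ℕ) + v - 1) (c + 2 - 1) = (z:ℕ)} with hAset
    have hsplit : Z (n+1) ⁻¹' {(z:ℕ)}
        = ⋃ i : Fin (c+2), (Y n ⁻¹' (Aset i) ∩ Z n ⁻¹' {(i:ℕ)}) := by
      ext ω
      simp only [Set.mem_preimage, Set.mem_singleton_iff, Set.mem_iUnion, Set.mem_inter_iff,
        Set.mem_setOf_eq, hAset]
      constructor
      · intro h
        refine ⟨⟨Z n ω, hZlt n ω⟩, ?_, rfl⟩
        rw [← h, hrec n ω]
      · rintro ⟨i, h1, h2⟩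
        rw [hrec n ω, h2, h1]
    have hdisj2 : Pairwise (Function.onFun Disjoint
        (fun i : Fin (c+2) => Y n ⁻¹' (Aset i) ∩ Z n ⁻¹' {(i:ℕ)})) :=
      fun i j hij => Disjoint.mono Set.inter_subset_right Set.inter_subset_right
        (hdisj n hij)
    have hmeas2 : ∀ i : Fin (c+2), MeasurableSet (Y n ⁻¹' (Aset i) ∩ Z n ⁻¹' {(i:ℕ)}) :=
      fun i => ((hYmeas n) MeasurableSet.of_discrete).inter
        ((hZmeas n) (measurableSet_singleton _))
    have h1 : μ (Z (n+1) ⁻¹' {(z:ℕ)})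
        = ∑' i : Fin (c+2), μ (Y n ⁻¹' (Aset i) ∩ Z n ⁻¹' {(i:ℕ)}) := by
      rw [hsplit]; exact measure_iUnion hdisj2 hmeas2
    have h2 : ∀ i : Fin (c+2), μ (Y n ⁻¹' (Aset i) ∩ Z n ⁻¹' {(i:ℕ)})
        = μ (Y n ⁻¹' (Aset i)) * μ (Z n ⁻¹' {(i:ℕ)}) :=
      fun i => (hindep n).measure_inter_preimage_eq_mul (Aset i) {(i:ℕ)}
        MeasurableSet.of_discrete (measurableSet_singleton _)
    -- key entry computation
    have hkey : ∀ i : Fin (c+2), (μ (Y n ⁻¹' (Aset i))).toReal = A i z := by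
      intro i
      have hilt : (i:ℕ) < c + 2 := i.isLt
      by_cases hz : (z:ℕ) = c + 2 - 1
      · have he : Aset i = ⋃ k : ℕ, {(c + 2 - (i:ℕ)) + k} := by
          ext v
          simp only [hAset, Set.mem_iUnion, Set.mem_singleton_iff, Set.mem_setOf_eq]
          constructor
          · intro h; exact ⟨v - (c + 2 - (i:ℕ)), by omega⟩
          · rintro ⟨k, rfl⟩; omega
        have hd : Pairwise (Function.onFun Disjoint
            (fun k : ℕ => Y n ⁻¹' {(c + 2 - (i:ℕ)) + k})) := by
          intro a b hab
          apply Set.disjoint_left.2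
          intro ω ha hb
          simp only [Set.mem_preimage, Set.mem_singleton_iff] at ha hb
          omega
        rw [he, Set.preimage_iUnion, measure_iUnion hd
          (fun k => (hYmeas n) (measurableSet_singleton _))]
        rw [ENNReal.tsum_toReal_eq (fun k => hfin _)]
        have ht : ∀ k : ℕ, (μ (Y n ⁻¹' {(c + 2 - (i:ℕ)) + k})).toReal
            = p ((c + 2 - (i:ℕ)) + k) := by
          intro k; rw [hYpre, hYdist]
        rw [tsum_congr ht]
        simp only [hA, moranP, Matrix.of_apply]
        rw [if_pos hz]
      · by_cases hi0 : (i:ℕ) = 0 ∧ (z:ℕ) = 0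
        · have he : Aset i = {0, 1} := by
            ext v
            simp only [hAset, Set.mem_setOf_eq, Set.mem_insert_iff, Set.mem_singleton_iff]
            omega
          have hpre : Y n ⁻¹' ({0, 1} : Set ℕ) = Y n ⁻¹' {0} ∪ Y n ⁻¹' {1} := by
            rw [← Set.preimage_union]; rfl
          have hd : Disjoint (Y n ⁻¹' {0}) (Y n ⁻¹' ({1} : Set ℕ)) := by
            apply Set.disjoint_left.2
            intro ω h0 h1
            simp only [Set.mem_preimage, Set.mem_singleton_iff] at h0 h1
            omega
          rw [he, hpre, measure_union hd ((hYmeas n) (measurableSet_singleton _)),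
            ENNReal.toReal_add (hfin _) (hfin _), hYpre, hYpre, hYdist, hYdist]
          simp only [hA, moranP, Matrix.of_apply]
          rw [if_neg hz, if_pos hi0]
        · by_cases hle : (i:ℕ) ≤ (z:ℕ) + 1
          · have he : Aset i = {(z:ℕ) + 1 - (i:ℕ)} := by
              ext v
              simp only [hAset, Set.mem_setOf_eq, Set.mem_singleton_iff]
              omega
            rw [he, hYpre, hYdist]
            simp only [hA, moranP, Matrix.of_apply]
            rw [if_neg hz, if_neg hi0, if_pos hle]
          · have he : Aset i = ∅ := by
              ext v
              simp only [hAset, Set.mem_setOf_eq, Set.mem_empty_iff_false, iff_false]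
              omega
            rw [he, Set.preimage_empty, measure_empty]
            simp only [hA, moranP, Matrix.of_apply]
            rw [if_neg hz, if_neg hi0, if_neg hle, ENNReal.toReal_zero]
      -- end hkey
    have hswap : ν (n+1) z = ∑ i : Fin (c+2), A i z * ν n i := by
      have h3 : ν (n+1) z = (μ (Z (n+1) ⁻¹' {(z:ℕ)})).toReal := by rw [hZpre]
      rw [h3, h1, tsum_congr (fun i => h2 i), tsum_fintype,
        ENNReal.toReal_sum (fun i _ => by
          exact ENNReal.mul_ne_top (hfin _) (hfin _))]
      refine Finset.sum_congr rfl fun i _ => ?_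
      rw [ENNReal.toReal_mul, hkey i, hZpre]
    rw [hswap]
    show _ = Matrix.vecMul (ν n) A z
    rw [show Matrix.vecMul (ν n) A z = ∑ i, ν n i * A i z from by
      simp [Matrix.vecMul, dotProduct]]
    exact Finset.sum_congr rfl fun i _ => mul_comm _ _
  -- contraction setup
  set Q := A ^ (3 * (c + 2)) with hQdef
  have hQpos : ∀ i j : Fin (c+2), 0 < Q i j :=
    fun i j => MoranAux.pow_pos_all hpnn hpsum hp0 hp01 i j
  have hne : (Finset.univ : Finset (Fin (c+2) × Fin (c+2))).Nonempty :=
    Finset.univ_nonempty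
  set ε : ℝ := Finset.univ.inf' hne (fun ij : Fin (c+2) × Fin (c+2) => Q ij.1 ij.2) with hε
  have hεpos : 0 < ε := by
    rw [hε, Finset.lt_inf'_iff]
    exact fun ij _ => hQpos ij.1 ij.2
  have hεle : ∀ i j, ε ≤ Q i j := fun i j => Finset.inf'_le _ (Finset.mem_univ (i, j))
  have key := MoranAux.tendsto_of_contraction A hAnn hrowA
    (s := 3 * (c + 2)) (by omega) hεpos hεle (by omega) π hπ1 hπP ν hν1 hνrec z
  have hfun : (fun n => (μ {ω | Y n ω = y ∧ Z n ω = (z:ℕ)}).toReal)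
      = fun n => p y * ν n z := by
    funext n
    rw [hjoint n y (z:ℕ)]
  rw [hfun]
  exact key.const_mul (p y)
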